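/- Deflation mismatch bound (Wedin-based perturbation of the best rank-1 fit): let Y_k* have leading singular triplet (σ_k*, u_k*, v_k*) and gap T_k* := min{min_{j>k} |σ_k* - σ_j*|, σ_k*} > 0, and let Y_{k,ℓ} be a matrix with ‖Y_{k,ℓ} - Y_k*‖_2 < (1/2) min_{j>k} |σ_k* - σ_j*|, so that Y_{k,ℓ} has a unique top singular triplet (σ_{1_k,ℓ}, u_{1_k,ℓ}, v_{1_k,ℓ}). Then ‖σ_{1_k,ℓ} u_{1_k,ℓ} v_{1_k,ℓ}ᵀ - σ_k* u_k* v_k*ᵀ‖_F ≤ C_k ‖Y_{k,ℓ} - Y_k*‖_F with C_k := 3σ_k*/T_k* + 1; equivalently, the deflation mismatch satisfies B_{k,ℓ} ≤ C_k ‖Y_{k,ℓ} - Y_k*‖_F. -/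

import Mathlib

open Matrix

/-- Euclidean norm of a real vector. -/
noncomputable def euclNorm {n : ℕ} (x : Fin n → ℝ) : ℝ :=
  Real.sqrt (∑ i, x i ^ 2)

/-- Frobenius norm of a real matrix. -/
noncomputable def frobNorm {m n : ℕ} (A : Matrix (Fin m) (Fin n) ℝ) : ℝ :=
  Real.sqrt (∑ i, ∑ j, A i j ^ 2)

/-- Spectral (ℓ₂ operator) norm of a real matrix. -/
noncomputable def specNorm {m n : ℕ} (A : Matrix (Fin m) (Fin n) ℝ) : ℝ :=
  sSup {c : ℝ | ∃ x : Fin n → ℝ, euclNorm x ≤ 1 ∧ c = euclNorm (A.mulVec x)}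

section Aux

variable {m n k : ℕ}

lemma euclNorm_nonneg (x : Fin n → ℝ) : 0 ≤ euclNorm x := Real.sqrt_nonneg _

lemma frobNorm_nonneg (A : Matrix (Fin m) (Fin n) ℝ) : 0 ≤ frobNorm A := Real.sqrt_nonneg _

lemma euclNorm_sq (x : Fin n → ℝ) : euclNorm x ^ 2 = ∑ i, x i ^ 2 :=
  Real.sq_sqrt (by positivity)

lemma frobNorm_sq (A : Matrix (Fin m) (Fin n) ℝ) : frobNorm A ^ 2 = ∑ i, ∑ j, A i j ^ 2 :=
  Real.sq_sqrt (by positivity)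

lemma cs_sum (x y : Fin n → ℝ) : ∑ i, x i * y i ≤ euclNorm x * euclNorm y :=
  Real.sum_mul_le_sqrt_mul_sqrt _ _ _

lemma euclNorm_smul (c : ℝ) (x : Fin n → ℝ) : euclNorm (c • x) = |c| * euclNorm x := by
  unfold euclNorm
  have h : ∑ i, (c • x) i ^ 2 = c ^ 2 * ∑ i, x i ^ 2 := by
    simp [Finset.mul_sum, mul_pow]
  rw [h, Real.sqrt_mul (sq_nonneg c), Real.sqrt_sq_eq_abs]

lemma euclNorm_add_le (x y : Fin n → ℝ) : euclNorm (x + y) ≤ euclNorm x + euclNorm y := by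
  have hs : ∑ i, (x + y) i ^ 2
      = (∑ i, x i ^ 2) + 2 * (∑ i, x i * y i) + (∑ i, y i ^ 2) := by
    simp only [Pi.add_apply, add_sq]
    rw [Finset.sum_add_distrib, Finset.sum_add_distrib, Finset.mul_sum]
    ring_nf
  have hcs := cs_sum x y
  have h1 := euclNorm_sq x
  have h2 := euclNorm_sq y
  calc euclNorm (x + y) = Real.sqrt (∑ i, (x + y) i ^ 2) := rfl
    _ ≤ Real.sqrt ((euclNorm x + euclNorm y) ^ 2) := by
        apply Real.sqrt_le_sqrt; rw [hs]; nlinarith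
    _ = euclNorm x + euclNorm y :=
        Real.sqrt_sq (add_nonneg (euclNorm_nonneg x) (euclNorm_nonneg y))

lemma euclNorm_eq_zero {x : Fin n → ℝ} (h : euclNorm x = 0) : x = 0 := by
  have hs : ∑ i, x i ^ 2 = 0 := by
    have := euclNorm_sq x
    rw [h] at this
    simpa using this.symm
  funext i
  have := (Finset.sum_eq_zero_iff_of_nonneg (fun i _ => sq_nonneg (x i))).1 hs i
    (Finset.mem_univ i)
  exact pow_eq_zero_iff (two_ne_zero) |>.1 this

lemma euclNorm_zero : euclNorm (0 : Fin n → ℝ) = 0 := by simp [euclNorm]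

lemma mulVec_le_frob (A : Matrix (Fin m) (Fin n) ℝ) (x : Fin n → ℝ) :
    euclNorm (A.mulVec x) ≤ frobNorm A * euclNorm x := by
  have hrow : ∀ i, (A.mulVec x) i ^ 2 ≤ (∑ j, A i j ^ 2) * (∑ j, x j ^ 2) := by
    intro i
    simpa [Matrix.mulVec, dotProduct] using
      Finset.sum_mul_sq_le_sq_mul_sq Finset.univ (A i) x
  calc euclNorm (A.mulVec x) = Real.sqrt (∑ i, (A.mulVec x) i ^ 2) := rfl
    _ ≤ Real.sqrt ((∑ i, ∑ j, A i j ^ 2) * (∑ j, x j ^ 2)) := by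
        apply Real.sqrt_le_sqrt
        rw [Finset.sum_mul]
        exact Finset.sum_le_sum fun i _ => hrow i
    _ = frobNorm A * euclNorm x := by
        rw [Real.sqrt_mul (by positivity)]; rfl

lemma specNorm_zero_mem (A : Matrix (Fin m) (Fin n) ℝ) :
    (0 : ℝ) ∈ {c : ℝ | ∃ x : Fin n → ℝ, euclNorm x ≤ 1 ∧ c = euclNorm (A.mulVec x)} := by
  refine ⟨0, ?_, ?_⟩
  · rw [euclNorm_zero]; norm_num
  · rw [Matrix.mulVec_zero, euclNorm_zero]

lemma specNorm_bdd (A : Matrix (Fin m) (Fin n) ℝ) :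
    BddAbove {c : ℝ | ∃ x : Fin n → ℝ, euclNorm x ≤ 1 ∧ c = euclNorm (A.mulVec x)} := by
  refine ⟨frobNorm A, ?_⟩
  rintro c ⟨x, hx, rfl⟩
  calc euclNorm (A.mulVec x) ≤ frobNorm A * euclNorm x := mulVec_le_frob A x
    _ ≤ frobNorm A * 1 := mul_le_mul_of_nonneg_left hx (frobNorm_nonneg A)
    _ = frobNorm A := mul_one _

lemma specNorm_nonneg (A : Matrix (Fin m) (Fin n) ℝ) : 0 ≤ specNorm A :=
  le_csSup (specNorm_bdd A) (specNorm_zero_mem A)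

lemma le_specNorm (A : Matrix (Fin m) (Fin n) ℝ) (x : Fin n → ℝ) :
    euclNorm (A.mulVec x) ≤ specNorm A * euclNorm x := by
  rcases eq_or_ne (euclNorm x) 0 with h | h
  · have hx0 : x = 0 := euclNorm_eq_zero h
    subst hx0
    rw [Matrix.mulVec_zero, euclNorm_zero, h, mul_zero]
  · have hx : 0 < euclNorm x := lt_of_le_of_ne (euclNorm_nonneg x) (Ne.symm h)
    have hmem : euclNorm (A.mulVec ((euclNorm x)⁻¹ • x)) ∈
        {c : ℝ | ∃ y : Fin n → ℝ, euclNorm y ≤ 1 ∧ c = euclNorm (A.mulVec y)} := by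
      refine ⟨(euclNorm x)⁻¹ • x, ?_, rfl⟩
      rw [euclNorm_smul, abs_of_pos (inv_pos.2 hx), inv_mul_cancel₀ h]
    have hle := le_csSup (specNorm_bdd A) hmem
    rw [Matrix.mulVec_smul, euclNorm_smul, abs_of_pos (inv_pos.2 hx)] at hle
    calc euclNorm (A.mulVec x)
        = ((euclNorm x)⁻¹ * euclNorm (A.mulVec x)) * euclNorm x := by
          field_simp
      _ ≤ specNorm A * euclNorm x :=
          mul_le_mul_of_nonneg_right hle (euclNorm_nonneg x)

lemma specNorm_le (A : Matrix (Fin m) (Fin n) ℝ) {M : ℝ}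
    (h : ∀ x : Fin n → ℝ, euclNorm x ≤ 1 → euclNorm (A.mulVec x) ≤ M) :
    specNorm A ≤ M := by
  apply csSup_le ⟨0, specNorm_zero_mem A⟩
  rintro c ⟨x, hx, rfl⟩
  exact h x hx

lemma le_specNorm_of_unit (A : Matrix (Fin m) (Fin n) ℝ) {x : Fin n → ℝ}
    (hx : euclNorm x ≤ 1) : euclNorm (A.mulVec x) ≤ specNorm A := by
  calc euclNorm (A.mulVec x) ≤ specNorm A * euclNorm x := le_specNorm A x
    _ ≤ specNorm A * 1 := mul_le_mul_of_nonneg_left hx (specNorm_nonneg A)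
    _ = specNorm A := mul_one _

lemma specNorm_add_le (A B : Matrix (Fin m) (Fin n) ℝ) :
    specNorm (A + B) ≤ specNorm A + specNorm B := by
  apply specNorm_le
  intro x hx
  rw [Matrix.add_mulVec]
  exact (euclNorm_add_le _ _).trans
    (add_le_add (le_specNorm_of_unit A hx) (le_specNorm_of_unit B hx))

lemma euclNorm_neg (x : Fin n → ℝ) : euclNorm (-x) = euclNorm x := by
  unfold euclNorm; congr 1; apply Finset.sum_congr rfl; intro i _; simp

lemma specNorm_neg (A : Matrix (Fin m) (Fin n) ℝ) : specNorm (-A) = specNorm A := by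
  unfold specNorm
  congr 1
  ext c
  constructor
  · rintro ⟨x, hx, rfl⟩
    exact ⟨x, hx, by rw [Matrix.neg_mulVec, euclNorm_neg]⟩
  · rintro ⟨x, hx, rfl⟩
    exact ⟨x, hx, by rw [Matrix.neg_mulVec, euclNorm_neg]⟩

/-- `⟨y, Aᵀ x⟩ = ⟨A y, x⟩` as plain sums. -/
lemma dot_transpose (A : Matrix (Fin m) (Fin n) ℝ) (x : Fin m → ℝ) (y : Fin n → ℝ) :
    ∑ j, y j * (Aᵀ.mulVec x) j = ∑ i, x i * (A.mulVec y) i := by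
  simp only [Matrix.mulVec, dotProduct, Matrix.transpose_apply]
  calc ∑ j, y j * ∑ i, A i j * x i = ∑ j, ∑ i, A i j * x i * y j := by
        apply Finset.sum_congr rfl; intro j _
        rw [Finset.mul_sum]; apply Finset.sum_congr rfl; intro i _; ring
    _ = ∑ i, ∑ j, A i j * x i * y j := Finset.sum_comm
    _ = ∑ i, x i * ∑ j, A i j * y j := by
        apply Finset.sum_congr rfl; intro i _
        rw [Finset.mul_sum]; apply Finset.sum_congr rfl; intro j _; ring

lemma specNorm_transpose_le (A : Matrix (Fin m) (Fin n) ℝ) : specNorm Aᵀ ≤ specNorm A := by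
  apply specNorm_le
  intro x hx
  set t := euclNorm (Aᵀ.mulVec x) with ht
  have htn : 0 ≤ t := euclNorm_nonneg _
  have key : t ^ 2 ≤ specNorm A * t := by
    have h2 : ∑ j, (Aᵀ.mulVec x) j ^ 2
        = ∑ i, x i * (A.mulVec (Aᵀ.mulVec x)) i := by
      rw [← dot_transpose A x (Aᵀ.mulVec x)]
      apply Finset.sum_congr rfl; intro j _; ring
    calc t ^ 2 = ∑ i, x i * (A.mulVec (Aᵀ.mulVec x)) i := by
          rw [ht, euclNorm_sq, h2]
      _ ≤ euclNorm x * euclNorm (A.mulVec (Aᵀ.mulVec x)) := cs_sum _ _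
      _ ≤ 1 * (specNorm A * t) := by
          apply mul_le_mul hx (le_specNorm A _) (euclNorm_nonneg _) zero_le_one
      _ = specNorm A * t := one_mul _
  nlinarith [specNorm_nonneg A, key, htn]

lemma frobNorm_transpose (A : Matrix (Fin m) (Fin n) ℝ) : frobNorm Aᵀ = frobNorm A := by
  unfold frobNorm
  congr 1
  rw [Finset.sum_comm]
  rfl

lemma frobNorm_add_le (X Y : Matrix (Fin m) (Fin n) ℝ) :
    frobNorm (X + Y) ≤ frobNorm X + frobNorm Y := by
  have hcs : ∑ i, ∑ j, X i j * Y i j ≤ frobNorm X * frobNorm Y := by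
    have h := Real.sum_mul_le_sqrt_mul_sqrt Finset.univ
      (fun p : Fin m × Fin n => X p.1 p.2) (fun p : Fin m × Fin n => Y p.1 p.2)
    simpa [Fintype.sum_prod_type, frobNorm] using h
  have hs : ∑ i, ∑ j, (X + Y) i j ^ 2
      = (∑ i, ∑ j, X i j ^ 2) + 2 * (∑ i, ∑ j, X i j * Y i j)
        + (∑ i, ∑ j, Y i j ^ 2) := by
    simp only [Matrix.add_apply, add_sq, Finset.sum_add_distrib, Finset.mul_sum, mul_assoc]
  have h1 := frobNorm_sq X
  have h2 := frobNorm_sq Y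
  calc frobNorm (X + Y) = Real.sqrt (∑ i, ∑ j, (X + Y) i j ^ 2) := rfl
    _ ≤ Real.sqrt ((frobNorm X + frobNorm Y) ^ 2) := by
        apply Real.sqrt_le_sqrt; rw [hs]; nlinarith
    _ = frobNorm X + frobNorm Y :=
        Real.sqrt_sq (add_nonneg (frobNorm_nonneg X) (frobNorm_nonneg Y))

lemma mul_vecMulVec (A : Matrix (Fin m) (Fin n) ℝ) (x : Fin n → ℝ) (y : Fin k → ℝ) :
    A * Matrix.vecMulVec x y = Matrix.vecMulVec (A.mulVec x) y := by
  ext i j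
  simp only [Matrix.mul_apply, Matrix.vecMulVec_apply, Matrix.mulVec, dotProduct]
  rw [Finset.sum_mul]
  apply Finset.sum_congr rfl; intro t _; ring

lemma vecMulVec_smul_left (c : ℝ) (x : Fin m → ℝ) (y : Fin n → ℝ) :
    Matrix.vecMulVec (c • x) y = c • Matrix.vecMulVec x y := by
  ext i j
  simp [Matrix.vecMulVec_apply, mul_assoc]

lemma vecMulVec_mulVec (a : Fin m → ℝ) (b x : Fin n → ℝ) :
    (Matrix.vecMulVec a b).mulVec x = (∑ j, b j * x j) • a := by
  funext i
  simp only [Matrix.mulVec, dotProduct, Matrix.vecMulVec_apply, Pi.smul_apply,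
    smul_eq_mul]
  rw [Finset.sum_mul]
  apply Finset.sum_congr rfl; intro j _; ring

lemma frob_vecMulVec (a : Fin m → ℝ) (b : Fin n → ℝ) :
    frobNorm (Matrix.vecMulVec a b) = euclNorm a * euclNorm b := by
  unfold frobNorm euclNorm
  have h : ∑ i, ∑ j, Matrix.vecMulVec a b i j ^ 2
      = (∑ i, a i ^ 2) * (∑ j, b j ^ 2) := by
    rw [Finset.sum_mul]
    apply Finset.sum_congr rfl; intro i _
    rw [Finset.mul_sum]
    apply Finset.sum_congr rfl; intro j _
    simp [Matrix.vecMulVec_apply]; ring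
  rw [h, Real.sqrt_mul (by positivity)]

lemma frob_mul_le (A : Matrix (Fin m) (Fin n) ℝ) (M : Matrix (Fin n) (Fin k) ℝ) :
    frobNorm (A * M) ≤ specNorm A * frobNorm M := by
  have hcol : ∀ j, ∑ i, (A * M) i j ^ 2
      ≤ specNorm A ^ 2 * ∑ t, M t j ^ 2 := by
    intro j
    have h1 : ∀ i, (A * M) i j = (A.mulVec fun t => M t j) i := by
      intro i
      simp [Matrix.mul_apply, Matrix.mulVec, dotProduct]
    have h2 : ∑ i, (A * M) i j ^ 2 = euclNorm (A.mulVec fun t => M t j) ^ 2 := by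
      rw [euclNorm_sq]
      exact Finset.sum_congr rfl fun i _ => by rw [h1 i]
    rw [h2]
    have h3 := le_specNorm A (fun t => M t j)
    have h4 : euclNorm (A.mulVec fun t => M t j) ^ 2
        ≤ (specNorm A * euclNorm fun t => M t j) ^ 2 :=
      pow_le_pow_left₀ (euclNorm_nonneg _) h3 2
    calc euclNorm (A.mulVec fun t => M t j) ^ 2
        ≤ (specNorm A * euclNorm fun t => M t j) ^ 2 := h4
      _ = specNorm A ^ 2 * ∑ t, M t j ^ 2 := by
          rw [mul_pow, euclNorm_sq]
  calc frobNorm (A * M) = Real.sqrt (∑ j, ∑ i, (A * M) i j ^ 2) := by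
        unfold frobNorm; rw [Finset.sum_comm]
    _ ≤ Real.sqrt (specNorm A ^ 2 * ∑ j, ∑ t, M t j ^ 2) := by
        apply Real.sqrt_le_sqrt
        rw [Finset.mul_sum]
        exact Finset.sum_le_sum fun j _ => hcol j
    _ = specNorm A * frobNorm M := by
        rw [Real.sqrt_mul (sq_nonneg _), Real.sqrt_sq (specNorm_nonneg A)]
        unfold frobNorm
        rw [Finset.sum_comm]

/-- Expansion of the squared norm of the projection residual. -/
lemma sub_proj_sq (v z : Fin n → ℝ) (hv : ∑ i, v i ^ 2 = 1) :
    ∑ i, (z i - (∑ j, v j * z j) * v i) ^ 2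
      = (∑ i, z i ^ 2) - (∑ j, v j * z j) ^ 2 := by
  set c := ∑ j, v j * z j with hc
  have hexp : ∀ i, (z i - c * v i) ^ 2
      = z i ^ 2 - 2 * c * (v i * z i) + c ^ 2 * v i ^ 2 := by
    intro i; ring
  rw [Finset.sum_congr rfl fun i _ => hexp i, Finset.sum_add_distrib,
    Finset.sum_sub_distrib, ← Finset.mul_sum, ← Finset.mul_sum, ← hc, hv]
  ring

lemma proj_le (v z : Fin n → ℝ) (hv : ∑ i, v i ^ 2 = 1) :
    euclNorm (z - (∑ j, v j * z j) • v) ≤ euclNorm z := by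
  unfold euclNorm
  apply Real.sqrt_le_sqrt
  have h : ∑ i, (z - (∑ j, v j * z j) • v) i ^ 2
      = ∑ i, (z i - (∑ j, v j * z j) * v i) ^ 2 := by
    apply Finset.sum_congr rfl; intro i _
    simp [Pi.sub_apply, Pi.smul_apply, smul_eq_mul]
  rw [h, sub_proj_sq v z hv]
  nlinarith [sq_nonneg (∑ j, v j * z j)]

lemma wedin_arith {sh s2 nq np e : ℝ} (h1 : sh * nq ≤ s2 * np + e)
    (h2 : sh * np ≤ s2 * nq + e) (hs2 : 0 ≤ s2) (hsh : 0 ≤ sh)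
    (hsum : 0 < sh + s2) (hq : 0 ≤ nq) : (sh - s2) * nq ≤ e := by
  nlinarith [mul_le_mul_of_nonneg_left h1 hsh, mul_le_mul_of_nonneg_left h2 hs2]

lemma qtk_arith {sh s2 sk tk nq e : ℝ} (hstep : (sh - s2) * nq ≤ e)
    (hgap : (sk - s2) / 2 < sh - s2) (htle : tk ≤ sk - s2) (hq : 0 ≤ nq)
    (he : 0 ≤ e) : nq * tk ≤ 2 * e := by
  nlinarith

lemma final_arith {sk tk nq e s2R : ℝ} (hqtk : nq * tk ≤ 2 * e)
    (hs : Real.sqrt 2 ≤ 3 / 2) (hq : 0 ≤ nq) (htk : 0 < tk) (hsk : 0 < sk) :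
    sk * (Real.sqrt 2 * nq) * tk ≤ 3 * sk * e := by
  have t1 : Real.sqrt 2 * (nq * tk) ≤ (3 / 2) * (2 * e) :=
    mul_le_mul hs hqtk (mul_nonneg hq htk.le) (by norm_num)
  nlinarith [mul_le_mul_of_nonneg_left t1 hsk.le]

lemma vecMulVec_add_left (x y : Fin m → ℝ) (z : Fin n → ℝ) :
    Matrix.vecMulVec (x + y) z = Matrix.vecMulVec x z + Matrix.vecMulVec y z := by
  ext i j
  simp [Matrix.vecMulVec_apply, add_mul]

end Aux

set_option maxHeartbeats 2000000 in
/-- **Deflation mismatch bound, Wedin-based.**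
Let the clean target `Y_k*` have leading singular triplet `(σ_k*, u_k*, v_k*)` and gap
`T_k* = min {min_{j>k} |σ_k* - σ_j*|, σ_k*} = min {σ_k* - σ₂(Y_k*), σ_k*} > 0`, and let
`Y_{k,ℓ}` be a matrix with `‖Y_{k,ℓ} - Y_k*‖₂ < (1/2) (σ_k* - σ₂(Y_k*))`, so that `Y_{k,ℓ}`
has a unique top singular triplet `(σ_{1_k,ℓ}, u_{1_k,ℓ}, v_{1_k,ℓ})`.  Then the deflation
mismatch (the Frobenius distance between the top singular components) satisfies
`‖σ_{1_k,ℓ} u_{1_k,ℓ} v_{1_k,ℓ}ᵀ - σ_k* u_k* v_k*ᵀ‖_F ≤ C_k ‖Y_{k,ℓ} - Y_k*‖_F`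
with `C_k = 3σ_k*/T_k* + 1`. -/
theorem deflation_mismatch_bound
    (m n : ℕ) (Ykstar Ykl : Matrix (Fin m) (Fin n) ℝ)
    (σk σ1kl Tk : ℝ)
    (ustar u1 : Fin m → ℝ) (vstar v1 : Fin n → ℝ)
    (hustar : euclNorm ustar = 1) (hvstar : euclNorm vstar = 1)
    (hu1 : euclNorm u1 = 1) (hv1 : euclNorm v1 = 1)
    -- (σ_k*, u_k*, v_k*) is the leading singular triplet of Y_k*
    (hσtop : σk = specNorm Ykstar) (hσpos : 0 < σk)
    (hMv : Ykstar.mulVec vstar = σk • ustar)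
    (hMTu : Ykstar.transpose.mulVec ustar = σk • vstar)
    -- the gap T_k* = min{σ_k* - σ₂(Y_k*), σ_k*}
    (hT : Tk = min (σk - specNorm (Ykstar - σk • Matrix.vecMulVec ustar vstar)) σk)
    (hTpos : 0 < Tk)
    -- (σ_{1_k,ℓ}, u_{1_k,ℓ}, v_{1_k,ℓ}) is the top singular triplet of Y_{k,ℓ}
    (hσ1kl : σ1kl = specNorm Ykl)
    (hMv' : Ykl.mulVec v1 = σ1kl • u1)
    (hMTu' : Ykl.transpose.mulVec u1 = σ1kl • v1)
    -- perturbation condition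
    (hpert : specNorm (Ykl - Ykstar)
      < (σk - specNorm (Ykstar - σk • Matrix.vecMulVec ustar vstar)) / 2) :
    frobNorm (σ1kl • Matrix.vecMulVec u1 v1 - σk • Matrix.vecMulVec ustar vstar)
      ≤ (3 * σk / Tk + 1) * frobNorm (Ykl - Ykstar) := by
  -- abbreviations
  set E : Matrix (Fin m) (Fin n) ℝ := Ykl - Ykstar with hE
  set A2 : Matrix (Fin m) (Fin n) ℝ := Ykstar - σk • Matrix.vecMulVec ustar vstar with hA2
  set σ2 : ℝ := specNorm A2 with hσ2def
  set εF : ℝ := frobNorm E with hεFdef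
  have hεF0 : 0 ≤ εF := frobNorm_nonneg E
  have hσ2nn : 0 ≤ σ2 := specNorm_nonneg A2
  have hσhnn : 0 ≤ σ1kl := hσ1kl ▸ specNorm_nonneg Ykl
  -- squared norms are 1
  have hu2 : ∑ i, ustar i ^ 2 = 1 := by
    have h := euclNorm_sq ustar; rw [hustar] at h; simpa using h.symm
  have hv2 : ∑ i, vstar i ^ 2 = 1 := by
    have h := euclNorm_sq vstar; rw [hvstar] at h; simpa using h.symm
  have hu12 : ∑ i, u1 i ^ 2 = 1 := by
    have h := euclNorm_sq u1; rw [hu1] at h; simpa using h.symm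
  have hv12 : ∑ i, v1 i ^ 2 = 1 := by
    have h := euclNorm_sq v1; rw [hv1] at h; simpa using h.symm
  have hu2m : ∑ i, ustar i * ustar i = 1 := by
    rw [← hu2]; exact Finset.sum_congr rfl fun i _ => (pow_two (ustar i)).symm
  have hv2m : ∑ i, vstar i * vstar i = 1 := by
    rw [← hv2]; exact Finset.sum_congr rfl fun i _ => (pow_two (vstar i)).symm
  -- angles and residual vectors
  set α : ℝ := ∑ i, ustar i * u1 i with hα
  set β : ℝ := ∑ i, vstar i * v1 i with hβ
  set p : Fin m → ℝ := u1 - α • ustar with hp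
  set q : Fin n → ℝ := v1 - β • vstar with hq
  have hup : ∑ i, ustar i * p i = 0 := by
    have h1 : ∀ i, ustar i * p i = ustar i * u1 i - α * (ustar i * ustar i) := by
      intro i; simp only [hp, Pi.sub_apply, Pi.smul_apply, smul_eq_mul]; ring
    rw [Finset.sum_congr rfl fun i _ => h1 i, Finset.sum_sub_distrib, ← Finset.mul_sum,
      hu2m, ← hα]; ring
  have hvq : ∑ i, vstar i * q i = 0 := by
    have h1 : ∀ i, vstar i * q i = vstar i * v1 i - β * (vstar i * vstar i) := by
      intro i; simp only [hq, Pi.sub_apply, Pi.smul_apply, smul_eq_mul]; ring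
    rw [Finset.sum_congr rfl fun i _ => h1 i, Finset.sum_sub_distrib, ← Finset.mul_sum,
      hv2m, ← hβ]; ring
  -- A2 annihilates the leading singular pair
  have hA2v : A2.mulVec vstar = 0 := by
    rw [hA2, Matrix.sub_mulVec, hMv, Matrix.smul_mulVec, vecMulVec_mulVec, hv2m,
      one_smul, sub_self]
  have hA2T : A2ᵀ = Ykstarᵀ - σk • Matrix.vecMulVec vstar ustar := by
    rw [hA2]
    ext i j
    simp [Matrix.transpose_apply, Matrix.sub_apply, Matrix.smul_apply,
      Matrix.vecMulVec_apply, mul_comm]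
  have hA2Tu : A2ᵀ.mulVec ustar = 0 := by
    rw [hA2T, Matrix.sub_mulVec, hMTu, Matrix.smul_mulVec, vecMulVec_mulVec, hu2m,
      one_smul, sub_self]
  -- perturbation vectors
  set z1 : Fin n → ℝ := Eᵀ.mulVec u1 with hz1
  set z2 : Fin m → ℝ := E.mulVec v1 with hz2
  have hz1eq : z1 = σ1kl • v1 - Ykstarᵀ.mulVec u1 := by
    rw [hz1, hE, Matrix.transpose_sub, Matrix.sub_mulVec, hMTu']
  have hz2eq : z2 = σ1kl • u1 - Ykstar.mulVec v1 := by
    rw [hz2, hE, Matrix.sub_mulVec, hMv']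
  -- decomposition of the clean action on the perturbed singular vectors
  have hu1d : u1 = α • ustar + p := by rw [hp]; abel
  have hv1d : v1 = β • vstar + q := by rw [hq]; abel
  have hApT : Ykstarᵀ.mulVec p = A2ᵀ.mulVec p := by
    rw [hA2T, Matrix.sub_mulVec, Matrix.smul_mulVec, vecMulVec_mulVec, hup]
    simp
  have hAq : Ykstar.mulVec q = A2.mulVec q := by
    rw [hA2, Matrix.sub_mulVec, Matrix.smul_mulVec, vecMulVec_mulVec, hvq]
    simp
  have hATu1 : Ykstarᵀ.mulVec u1 = (α * σk) • vstar + A2ᵀ.mulVec p := by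
    conv_lhs => rw [hu1d]
    rw [Matrix.mulVec_add, Matrix.mulVec_smul, hMTu, hApT, smul_smul]
  have hAv1 : Ykstar.mulVec v1 = (β * σk) • ustar + A2.mulVec q := by
    conv_lhs => rw [hv1d]
    rw [Matrix.mulVec_add, Matrix.mulVec_smul, hMv, hAq, smul_smul]
  have he2 : σ1kl • v1 = (α * σk) • vstar + A2ᵀ.mulVec p + z1 := by
    rw [hz1eq, hATu1]; abel
  have he2' : σ1kl • u1 = (β * σk) • ustar + A2.mulVec q + z2 := by
    rw [hz2eq, hAv1]; abel
  set c1 : ℝ := ∑ i, vstar i * z1 i with hc1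
  set c2 : ℝ := ∑ i, ustar i * z2 i with hc2
  have he4 : σ1kl * β = α * σk + c1 := by
    have h1 : ∑ i, vstar i * (σ1kl • v1) i = σ1kl * β := by
      rw [hβ, Finset.mul_sum]
      apply Finset.sum_congr rfl; intro i _
      simp only [Pi.smul_apply, smul_eq_mul]; ring
    have h2 : ∑ i, vstar i * ((α * σk) • vstar + A2ᵀ.mulVec p + z1) i = α * σk + c1 := by
      have hsplit : ∀ i, vstar i * ((α * σk) • vstar + A2ᵀ.mulVec p + z1) i
          = (α * σk) * vstar i ^ 2 + vstar i * (A2ᵀ.mulVec p) i + vstar i * z1 i := by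
        intro i
        simp only [Pi.add_apply, Pi.smul_apply, smul_eq_mul]; ring
      rw [Finset.sum_congr rfl fun i _ => hsplit i, Finset.sum_add_distrib,
        Finset.sum_add_distrib, ← Finset.mul_sum, hv2]
      have hdot0 : ∑ i, vstar i * (A2ᵀ.mulVec p) i = 0 := by
        rw [dot_transpose A2 p vstar, hA2v]; simp
      rw [hdot0, ← hc1]; ring
    rw [← h1, he2]; exact h2
  have he4' : σ1kl * α = β * σk + c2 := by
    have h1 : ∑ i, ustar i * (σ1kl • u1) i = σ1kl * α := by
      rw [hα, Finset.mul_sum]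
      apply Finset.sum_congr rfl; intro i _
      simp only [Pi.smul_apply, smul_eq_mul]; ring
    have h2 : ∑ i, ustar i * ((β * σk) • ustar + A2.mulVec q + z2) i = β * σk + c2 := by
      have hsplit : ∀ i, ustar i * ((β * σk) • ustar + A2.mulVec q + z2) i
          = (β * σk) * ustar i ^ 2 + ustar i * (A2.mulVec q) i + ustar i * z2 i := by
        intro i
        simp only [Pi.add_apply, Pi.smul_apply, smul_eq_mul]; ring
      rw [Finset.sum_congr rfl fun i _ => hsplit i, Finset.sum_add_distrib,
        Finset.sum_add_distrib, ← Finset.mul_sum, hu2]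
      have hdot0 : ∑ i, ustar i * (A2.mulVec q) i = 0 := by
        rw [← dot_transpose A2 ustar q, hA2Tu]; simp
      rw [hdot0, ← hc2]; ring
    rw [← h1, he2']; exact h2
  have hqid : σ1kl • q = A2ᵀ.mulVec p + (z1 - c1 • vstar) := by
    rw [hq, smul_sub, he2, smul_smul, he4, add_smul]
    abel
  have hpid : σ1kl • p = A2.mulVec q + (z2 - c2 • ustar) := by
    rw [hp, smul_sub, he2', smul_smul, he4', add_smul]
    abel
  -- residual norm bounds
  have hz1b : euclNorm z1 ≤ εF := by
    have h := mulVec_le_frob Eᵀ u1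
    rw [← hz1, frobNorm_transpose, hu1, mul_one] at h
    exact h
  have hz2b : euclNorm z2 ≤ εF := by
    have h := mulVec_le_frob E v1
    rw [← hz2, hv1, mul_one] at h
    exact h
  have hσhq : σ1kl * euclNorm q ≤ σ2 * euclNorm p + εF := by
    have h0 : euclNorm (σ1kl • q) = σ1kl * euclNorm q := by
      rw [euclNorm_smul, abs_of_nonneg hσhnn]
    have hb1 : euclNorm (A2ᵀ.mulVec p) ≤ σ2 * euclNorm p := by
      calc euclNorm (A2ᵀ.mulVec p) ≤ specNorm A2ᵀ * euclNorm p := le_specNorm _ _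
        _ ≤ σ2 * euclNorm p :=
            mul_le_mul_of_nonneg_right (specNorm_transpose_le A2) (euclNorm_nonneg p)
    have hb2 : euclNorm (z1 - c1 • vstar) ≤ euclNorm z1 := by
      rw [hc1]; exact proj_le vstar z1 hv2
    calc σ1kl * euclNorm q = euclNorm (σ1kl • q) := h0.symm
      _ = euclNorm (A2ᵀ.mulVec p + (z1 - c1 • vstar)) := by rw [hqid]
      _ ≤ euclNorm (A2ᵀ.mulVec p) + euclNorm (z1 - c1 • vstar) := euclNorm_add_le _ _
      _ ≤ σ2 * euclNorm p + εF := add_le_add hb1 (hb2.trans hz1b)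
  have hσhp : σ1kl * euclNorm p ≤ σ2 * euclNorm q + εF := by
    have h0 : euclNorm (σ1kl • p) = σ1kl * euclNorm p := by
      rw [euclNorm_smul, abs_of_nonneg hσhnn]
    have hb1 : euclNorm (A2.mulVec q) ≤ σ2 * euclNorm q := le_specNorm _ _
    have hb2 : euclNorm (z2 - c2 • ustar) ≤ euclNorm z2 := by
      rw [hc2]; exact proj_le ustar z2 hu2
    calc σ1kl * euclNorm p = euclNorm (σ1kl • p) := h0.symm
      _ = euclNorm (A2.mulVec q + (z2 - c2 • ustar)) := by rw [hpid]
      _ ≤ euclNorm (A2.mulVec q) + euclNorm (z2 - c2 • ustar) := euclNorm_add_le _ _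
      _ ≤ σ2 * euclNorm q + εF := add_le_add hb1 (hb2.trans hz2b)
  -- Weyl inequality and spectral gap
  have hWeyl : σk ≤ σ1kl + specNorm E := by
    have h1 : specNorm Ykstar ≤ specNorm Ykl + specNorm (Ykstar - Ykl) := by
      have h := specNorm_add_le Ykl (Ykstar - Ykl)
      rw [show Ykl + (Ykstar - Ykl) = Ykstar from by abel] at h
      exact h
    have h2 : specNorm (Ykstar - Ykl) = specNorm E := by
      rw [show Ykstar - Ykl = -E from by rw [hE]; abel, specNorm_neg]
    rw [hσtop, hσ1kl]; linarith
  have hTle : Tk ≤ σk - σ2 := hT ▸ min_le_left _ _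
  have hδpos : 0 < σk - σ2 := lt_of_lt_of_le hTpos hTle
  have hgap : (σk - σ2) / 2 < σ1kl - σ2 := by linarith [hWeyl, hpert]
  -- solve for the residual of v
  have hstep1 : (σ1kl - σ2) * euclNorm q ≤ εF :=
    wedin_arith hσhq hσhp hσ2nn hσhnn (by linarith) (euclNorm_nonneg q)
  have hqTk : euclNorm q * Tk ≤ 2 * εF :=
    qtk_arith hstep1 hgap hTle (euclNorm_nonneg q) hεF0
  -- the matrix identity
  have hmat : σ1kl • Matrix.vecMulVec u1 v1 - σk • Matrix.vecMulVec ustar vstar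
      = Matrix.vecMulVec z2 v1
        + Ykstar * (Matrix.vecMulVec v1 v1 - Matrix.vecMulVec vstar vstar) := by
    have h1 : Ykstar * Matrix.vecMulVec v1 v1
        = Matrix.vecMulVec (Ykstar.mulVec v1) v1 := _root_.mul_vecMulVec _ _ _
    have h2 : Ykstar * Matrix.vecMulVec vstar vstar
        = σk • Matrix.vecMulVec ustar vstar := by
      rw [_root_.mul_vecMulVec, hMv, vecMulVec_smul_left]
    have h3 : Matrix.vecMulVec z2 v1 + Matrix.vecMulVec (Ykstar.mulVec v1) v1
        = σ1kl • Matrix.vecMulVec u1 v1 := by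
      rw [← vecMulVec_add_left,
        show z2 + Ykstar.mulVec v1 = σ1kl • u1 from by rw [hz2eq]; abel,
        vecMulVec_smul_left]
    rw [Matrix.mul_sub, h1, h2, add_sub, h3]
  -- Frobenius norm bounds for the two pieces
  have hfz2 : frobNorm (Matrix.vecMulVec z2 v1) ≤ εF := by
    rw [frob_vecMulVec, hv1, mul_one]
    exact hz2b
  have hqn : euclNorm q ^ 2 = 1 - β ^ 2 := by
    rw [euclNorm_sq]
    have h : ∑ i, q i ^ 2 = ∑ i, (v1 i - (∑ j, vstar j * v1 j) * vstar i) ^ 2 := by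
      apply Finset.sum_congr rfl; intro i _
      simp only [hq, Pi.sub_apply, Pi.smul_apply, smul_eq_mul, hβ]
    rw [h, sub_proj_sq vstar v1 hv2, hv12, ← hβ]
  have hVd : frobNorm (Matrix.vecMulVec v1 v1 - Matrix.vecMulVec vstar vstar)
      = Real.sqrt 2 * euclNorm q := by
    have hinner : ∀ i, ∑ j, (v1 i * v1 j - vstar i * vstar j) ^ 2
        = v1 i ^ 2 * (∑ j, v1 j ^ 2)
          - 2 * (vstar i * v1 i) * (∑ j, vstar j * v1 j)
          + vstar i ^ 2 * (∑ j, vstar j ^ 2) := by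
      intro i
      rw [Finset.mul_sum, Finset.mul_sum, Finset.mul_sum, ← Finset.sum_sub_distrib,
        ← Finset.sum_add_distrib]
      apply Finset.sum_congr rfl; intro j _; ring
    have hItotal : ∑ i, ∑ j, (v1 i * v1 j - vstar i * vstar j) ^ 2 = 2 - 2 * β ^ 2 := by
      rw [Finset.sum_congr rfl fun i _ => hinner i]
      rw [hv12, hv2, ← hβ]
      simp only [mul_one]
      rw [Finset.sum_add_distrib, Finset.sum_sub_distrib, hv12, hv2]
      have hmid : ∑ i, 2 * (vstar i * v1 i) * β = 2 * β ^ 2 := by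
        rw [← Finset.sum_mul, ← Finset.mul_sum, ← hβ]; ring
      rw [hmid]; ring
    have hentries : ∑ i, ∑ j,
        (Matrix.vecMulVec v1 v1 - Matrix.vecMulVec vstar vstar) i j ^ 2
        = 2 - 2 * β ^ 2 := by
      rw [← hItotal]
      apply Finset.sum_congr rfl; intro i _
      apply Finset.sum_congr rfl; intro j _
      simp [Matrix.sub_apply, Matrix.vecMulVec_apply]
    unfold frobNorm
    rw [hentries, show (2 : ℝ) - 2 * β ^ 2 = 2 * euclNorm q ^ 2 from by rw [hqn]; ring,
      Real.sqrt_mul (by norm_num), Real.sqrt_sq (euclNorm_nonneg q)]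
  have hfA : frobNorm (Ykstar * (Matrix.vecMulVec v1 v1 - Matrix.vecMulVec vstar vstar))
      ≤ σk * (Real.sqrt 2 * euclNorm q) := by
    calc frobNorm (Ykstar * (Matrix.vecMulVec v1 v1 - Matrix.vecMulVec vstar vstar))
        ≤ specNorm Ykstar
            * frobNorm (Matrix.vecMulVec v1 v1 - Matrix.vecMulVec vstar vstar) :=
          frob_mul_le _ _
      _ = σk * (Real.sqrt 2 * euclNorm q) := by rw [← hσtop, hVd]
  have hfinal1 : frobNorm (σ1kl • Matrix.vecMulVec u1 v1 - σk • Matrix.vecMulVec ustar vstar)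
      ≤ εF + σk * (Real.sqrt 2 * euclNorm q) := by
    rw [hmat]
    exact (frobNorm_add_le _ _).trans (add_le_add hfz2 hfA)
  have hsqrt2 : Real.sqrt 2 ≤ 3 / 2 := by
    rw [show (3 : ℝ) / 2 = Real.sqrt ((3 / 2) ^ 2) from (Real.sqrt_sq (by norm_num)).symm]
    exact Real.sqrt_le_sqrt (by norm_num)
  have hlast : σk * (Real.sqrt 2 * euclNorm q) ≤ 3 * σk / Tk * εF := by
    rw [div_mul_eq_mul_div, le_div_iff₀ hTpos]
    exact final_arith (s2R := 0) hqTk hsqrt2 (euclNorm_nonneg q) hTpos hσpos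
  calc frobNorm (σ1kl • Matrix.vecMulVec u1 v1 - σk • Matrix.vecMulVec ustar vstar)
      ≤ εF + σk * (Real.sqrt 2 * euclNorm q) := hfinal1
    _ ≤ εF + 3 * σk / Tk * εF := by linarith
    _ = (3 * σk / Tk + 1) * εF := by ring
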